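/- arXiv:2101.10052 — 4 statements merged into one kernel-verified Lean document; each statement's English description precedes it below -/
import Mathlib

section
/- (Stability of the discrete extension operator, Lemma 2.1.) Under assumptions (A1), (A3), (A4) and the approximation hypothesis that for every v ∈ V and every 0 ≤ j ≤ l there exists w⋆ ∈ W^E with N_0(v − w⋆) ≤ C₂ h^j N_j(v), the extension operator E = A ∘ F satisfies: there is a constant C, depending only on C₁, C₂, C₃, C₄, such that N_j(A(F v)) ≤ C N_j(v) for every v ∈ V and every 0 ≤ j ≤ l. -/
/-- Stability of the discrete extension operator, Lemma 2.1:
Under assumptions (A1), (A3), (A4) and the approximation hypothesis that for every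
`v ∈ V` and every `0 ≤ j ≤ l` there exists `w⋆ ∈ W^E` with
`N_0(v - w⋆) ≤ C₂ h^j N_j(v)`, the extension operator `E = A ∘ F` satisfies
`N_j(A (F v)) ≤ C N_j(v)` for every `v ∈ V` and every `0 ≤ j ≤ l`, where `C` depends
only on `C₁, C₂, C₃, C₄`. -/
theorem stmt_1 (C₁ C₂ C₃ C₄ : ℝ)
    (hC₁ : 0 < C₁) (hC₂ : 0 < C₂) (hC₃ : 0 < C₃) (hC₄ : 0 < C₄) :
    ∃ C : ℝ, 0 < C ∧
      ∀ (W : Type) [instW : AddCommGroup W] [instWM : Module ℝ W]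
        (l : ℕ) (h : ℝ), 0 < h →
        ∀ (N M : ℕ → Seminorm ℝ W) (V WE : Submodule ℝ W) (A F : W →ₗ[ℝ] W),
        -- M_j ≤ N_j (interior seminorm is dominated by the full seminorm)
        (∀ w : W, ∀ j ≤ l, M j w ≤ N j w) →
        -- Assumption (A1): inverse inequality
        (∀ w : W, ∀ j ≤ l, N j w ≤ C₁ / h ^ j * N 0 w) →
        -- Assumption (A3): A is bounded, maps into V and is the identity on V
        (∀ w : W, A w ∈ V) →
        (∀ w : W, N 0 (A w) ≤ C₃ * N 0 w) →
        (∀ v ∈ V, A v = v) →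
        -- Assumption (A4): F is bounded and is the identity on W^E
        (∀ w : W, ∀ j ≤ l, N j (F w) ≤ C₄ * M j w) →
        (∀ w ∈ WE, F w = w) →
        -- approximation hypothesis
        (∀ v ∈ V, ∀ j ≤ l, ∃ ws ∈ WE, N 0 (v - ws) ≤ C₂ * h ^ j * N j v) →
        ∀ v ∈ V, ∀ j ≤ l, N j (A (F v)) ≤ C * N j v := by
  refine ⟨1 + C₁ * C₂ * C₃ * (C₄ + 1), by positivity, ?_⟩
  intro W _ _ l h hh N M V WE A F hMN hA1 hAV hA3 hAid hA4 hFid happ v hv j hj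
  obtain ⟨ws, hws, hap⟩ := happ v hv j hj
  set e := v - ws with he
  have hFe : F v - v = F e - e := by
    have : F ws = ws := hFid ws hws
    simp [he, map_sub, this]
  have hkey : A (F v) - v = A (F e - e) := by
    rw [← hFe, map_sub, hAid v hv]
  have hpow : 0 < h ^ j := pow_pos hh j
  have hN0e : (0:ℝ) ≤ N 0 e := apply_nonneg _ _
  have hNjv : (0:ℝ) ≤ N j v := apply_nonneg _ _
  -- bound N j (A (F v) - v)
  have h1 : N j (A (F v) - v) ≤ C₁ / h ^ j * N 0 (A (F v) - v) :=
    hA1 _ j hj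
  have h2 : N 0 (A (F v) - v) ≤ C₃ * N 0 (F e - e) := by
    rw [hkey]; exact hA3 _
  have h3 : N 0 (F e - e) ≤ (C₄ + 1) * N 0 e := by
    have t1 : N 0 (F e - e) ≤ N 0 (F e) + N 0 e := by
      simpa [sub_eq_add_neg] using map_add_le_add (N 0) (F e) (-e)
    have t2 : N 0 (F e) ≤ C₄ * M 0 e := hA4 e 0 (Nat.zero_le l)
    have t3 : M 0 e ≤ N 0 e := hMN e 0 (Nat.zero_le l)
    nlinarith
  have h4 : N 0 e ≤ C₂ * h ^ j * N j v := hap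
  have hbound : N j (A (F v) - v) ≤ C₁ * C₂ * C₃ * (C₄ + 1) * N j v := by
    have hNF : (0:ℝ) ≤ N 0 (F e - e) := apply_nonneg _ _
    have hNA : (0:ℝ) ≤ N 0 (A (F v) - v) := apply_nonneg _ _
    have chain : N 0 (A (F v) - v) ≤ C₃ * ((C₄ + 1) * (C₂ * h ^ j * N j v)) := by
      calc N 0 (A (F v) - v) ≤ C₃ * N 0 (F e - e) := h2
        _ ≤ C₃ * ((C₄ + 1) * N 0 e) :=
            mul_le_mul_of_nonneg_left h3 hC₃.le
        _ ≤ C₃ * ((C₄ + 1) * (C₂ * h ^ j * N j v)) := by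
            apply mul_le_mul_of_nonneg_left _ hC₃.le
            exact mul_le_mul_of_nonneg_left h4 (by positivity)
    calc N j (A (F v) - v) ≤ C₁ / h ^ j * N 0 (A (F v) - v) := h1
      _ ≤ C₁ / h ^ j * (C₃ * ((C₄ + 1) * (C₂ * h ^ j * N j v))) := by
          apply mul_le_mul_of_nonneg_left chain (by positivity)
      _ = C₁ * C₂ * C₃ * (C₄ + 1) * N j v := by
          field_simp
  have htri : N j (A (F v)) ≤ N j (A (F v) - v) + N j v := by
    simpa using map_add_le_add (N j) (A (F v) - v) v
  nlinarith
end

section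
/- (Approximation property of the extended space, Lemma 2.2.) Under assumptions (A1) and (A3), let U be a real vector space containing W to which the seminorms N_m, m = 0,…,l, extend. Let v ∈ U, R ≥ 0 and s ≥ 0, and suppose there exist v⋆ ∈ V with N_m(v − v⋆) ≤ C₂ h^{s−m} R for all 0 ≤ m ≤ l, and w⋆ ∈ W^E with N_m(v − w⋆) ≤ C₂ h^{s−m} R for all 0 ≤ m ≤ l. Then the element v⋆^E := A w⋆ ∈ V satisfies N_m(v − A w⋆) ≤ C h^{s−m} R for all 0 ≤ m ≤ l, where C depends only on C₁, C₂, C₃. -/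
/-- Approximation property of the extended space, Lemma 2.2:
Under assumptions (A1) and (A3), stated on an ambient space `U ⊇ W` to which the
seminorms `N_m` extend: if `v ∈ U`, `R ≥ 0`, `s ≥ 0` and there exist `v⋆ ∈ V` and
`w⋆ ∈ W^E` with `N_m(v - v⋆) ≤ C₂ h^{s-m} R` and `N_m(v - w⋆) ≤ C₂ h^{s-m} R` for all
`0 ≤ m ≤ l`, then `v⋆^E := A w⋆ ∈ V` and `N_m(v - A w⋆) ≤ C h^{s-m} R` for all
`0 ≤ m ≤ l`, where `C` depends only on `C₁, C₂, C₃`. -/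
theorem stmt_2 (C₁ C₂ C₃ : ℝ) (hC₁ : 0 < C₁) (hC₂ : 0 < C₂) (hC₃ : 0 < C₃) :
    ∃ C : ℝ, 0 < C ∧
      ∀ (U : Type) [instU : AddCommGroup U] [instUM : Module ℝ U]
        (l : ℕ) (h : ℝ), 0 < h →
        ∀ (N : ℕ → Seminorm ℝ U) (W V WE : Submodule ℝ U), V ≤ W → WE ≤ W →
        ∀ (A : U →ₗ[ℝ] U),
        -- Assumption (A1) on W: inverse inequality
        (∀ w ∈ W, ∀ j ≤ l, N j w ≤ C₁ / h ^ j * N 0 w) →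
        -- Assumption (A3): A is bounded on W, maps W into V and is the identity on V
        (∀ w ∈ W, A w ∈ V) →
        (∀ w ∈ W, N 0 (A w) ≤ C₃ * N 0 w) →
        (∀ v ∈ V, A v = v) →
        ∀ (v : U) (R s : ℝ), 0 ≤ R → 0 ≤ s →
        ∀ vs ∈ V, (∀ m ≤ l, N m (v - vs) ≤ C₂ * h ^ (s - (m : ℝ)) * R) →
        ∀ ws ∈ WE, (∀ m ≤ l, N m (v - ws) ≤ C₂ * h ^ (s - (m : ℝ)) * R) →
        A ws ∈ V ∧ ∀ m ≤ l, N m (v - A ws) ≤ C * h ^ (s - (m : ℝ)) * R := by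

  refine ⟨C₂ + 2 * C₁ * C₂ * C₃, by positivity, ?_⟩
  intro U _ _ l h hh N W V WE hVW hWEW A hA1 hAV hA3 hAid v R s hR hs vs hvs hvsN ws hws hwsN
  have hwsW : (ws : U) ∈ W := hWEW hws
  refine ⟨hAV ws hwsW, ?_⟩
  intro m hm
  -- vs - A ws = A (vs - ws)
  have hsubW : (vs - ws : U) ∈ W := W.sub_mem (hVW hvs) hwsW
  have hAeq : A (vs - ws) = vs - A ws := by
    rw [map_sub, hAid vs hvs]
  -- N 0 (vs - ws) ≤ 2 * C₂ * h^s * R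
  have h0 : N 0 (vs - ws) ≤ 2 * (C₂ * h ^ (s - (0:ℕ)) * R) := by
    have : (vs - ws : U) = (vs - v) + (v - ws) := by abel
    rw [this]
    calc N 0 ((vs - v) + (v - ws)) ≤ N 0 (vs - v) + N 0 (v - ws) := map_add_le_add _ _ _
      _ ≤ C₂ * h ^ (s - (0:ℕ)) * R + C₂ * h ^ (s - (0:ℕ)) * R := by
          have h1 := hvsN 0 (Nat.zero_le l)
          have h2 := hwsN 0 (Nat.zero_le l)
          rw [map_sub_rev] at h1
          exact add_le_add h1 h2
      _ = 2 * (C₂ * h ^ (s - (0:ℕ)) * R) := by ring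
  have hrpow0 : h ^ (s - ((0:ℕ):ℝ)) = h ^ s := by norm_num
  rw [hrpow0] at h0
  -- triangle
  have htri : N m (v - A ws) ≤ N m (v - vs) + N m (vs - A ws) := by
    have : (v - A ws : U) = (v - vs) + (vs - A ws) := by abel
    rw [this]; exact map_add_le_add _ _ _
  have hmid : N m (vs - A ws) ≤ 2 * C₁ * C₂ * C₃ * h ^ (s - (m:ℝ)) * R := by
    rw [← hAeq]
    calc N m (A (vs - ws)) ≤ C₁ / h ^ m * N 0 (A (vs - ws)) :=
          hA1 _ (hAV _ hsubW |> hVW) m hm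
      _ ≤ C₁ / h ^ m * (C₃ * N 0 (vs - ws)) := by
          have := hA3 _ hsubW
          gcongr
      _ ≤ C₁ / h ^ m * (C₃ * (2 * (C₂ * h ^ s * R))) := by
          gcongr
      _ = 2 * C₁ * C₂ * C₃ * (h ^ s / h ^ m) * R := by ring
      _ = 2 * C₁ * C₂ * C₃ * h ^ (s - (m:ℝ)) * R := by
          rw [Real.rpow_sub hh, Real.rpow_natCast]
  calc N m (v - A ws) ≤ N m (v - vs) + N m (vs - A ws) := htri
    _ ≤ C₂ * h ^ (s - (m:ℝ)) * R + 2 * C₁ * C₂ * C₃ * h ^ (s - (m:ℝ)) * R :=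
        add_le_add (hvsN m hm) hmid
    _ = (C₂ + 2 * C₁ * C₂ * C₃) * h ^ (s - (m:ℝ)) * R := by ring
end

section
/- (Interpolation error estimate, Lemma 2.5.) Under assumptions (A1), (A3), (A4), let U be a real vector space containing W to which the seminorms N_m, m = 0,…,l, extend. Let v ∈ U, R ≥ 0 and s ≥ 0, and suppose: (i) there is an interpolant π v ∈ V with N_m(v − π v) ≤ C_π h^{s−m} R for all 0 ≤ m ≤ l; (ii) there exists w⋆ ∈ W^E with N_m(v − w⋆) ≤ C₂ h^{s−m} R for all 0 ≤ m ≤ l. Then the extended interpolant π^E v := A(F(π v)) satisfies N_m(v − A(F(π v))) ≤ C h^{s−m} R for all 0 ≤ m ≤ l, where C depends only on C₁, C₂, C₃, C₄, C_π. -/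
/-- Interpolation error estimate, Lemma 2.5:
Under assumptions (A1), (A3), (A4), stated on an ambient space `U ⊇ W` to which the
seminorms `N_m` extend: if `v ∈ U`, `R ≥ 0`, `s ≥ 0`, there is an interpolant
`π v ∈ V` with `N_m(v - π v) ≤ C_π h^{s-m} R` for all `0 ≤ m ≤ l`, and there is
`w⋆ ∈ W^E` with `N_m(v - w⋆) ≤ C₂ h^{s-m} R` for all `0 ≤ m ≤ l`, then the extended
interpolant `π^E v := A (F (π v))` satisfies `N_m(v - A (F (π v))) ≤ C h^{s-m} R` for
all `0 ≤ m ≤ l`, where `C` depends only on `C₁, C₂, C₃, C₄, C_π`. -/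
theorem stmt_3 (C₁ C₂ C₃ C₄ Cπ : ℝ)
    (hC₁ : 0 < C₁) (hC₂ : 0 < C₂) (hC₃ : 0 < C₃) (hC₄ : 0 < C₄) (hCπ : 0 < Cπ) :
    ∃ C : ℝ, 0 < C ∧
      ∀ (U : Type) [instU : AddCommGroup U] [instUM : Module ℝ U]
        (l : ℕ) (h : ℝ), 0 < h →
        ∀ (N M : ℕ → Seminorm ℝ U) (W V WE : Submodule ℝ U), V ≤ W → WE ≤ W →
        ∀ (A F : U →ₗ[ℝ] U),
        -- M_j ≤ N_j on W (interior seminorm dominated by full seminorm)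
        (∀ w ∈ W, ∀ j ≤ l, M j w ≤ N j w) →
        -- Assumption (A1) on W: inverse inequality
        (∀ w ∈ W, ∀ j ≤ l, N j w ≤ C₁ / h ^ j * N 0 w) →
        -- Assumption (A3): A is bounded on W, maps W into V and is the identity on V
        (∀ w ∈ W, A w ∈ V) →
        (∀ w ∈ W, N 0 (A w) ≤ C₃ * N 0 w) →
        (∀ v ∈ V, A v = v) →
        -- Assumption (A4): F maps W into W, is bounded and is the identity on W^E
        (∀ w ∈ W, F w ∈ W) →
        (∀ w ∈ W, ∀ j ≤ l, N j (F w) ≤ C₄ * M j w) →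
        (∀ w ∈ WE, F w = w) →
        ∀ (v : U) (R s : ℝ), 0 ≤ R → 0 ≤ s →
        -- (i) the interpolant π v ∈ V and its error bound
        ∀ pv ∈ V, (∀ m ≤ l, N m (v - pv) ≤ Cπ * h ^ (s - (m : ℝ)) * R) →
        -- (ii) the approximation w⋆ ∈ W^E
        ∀ ws ∈ WE, (∀ m ≤ l, N m (v - ws) ≤ C₂ * h ^ (s - (m : ℝ)) * R) →
        ∀ m ≤ l, N m (v - A (F pv)) ≤ C * h ^ (s - (m : ℝ)) * R := by
  refine ⟨Cπ + C₁ * C₃ * (1 + C₄) * (Cπ + C₂), by positivity, ?_⟩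
  intro U _ _ l h hh N M W V WE hVW hWEW A F hMN hA1 hAV hAb hAid hFW hFb hFid
    v R s hR hs pv hpv hpvb ws hws hwsb m hm
  have hpvW : pv ∈ W := hVW hpv
  have hwsW : ws ∈ W := hWEW hws
  have hFpvW : F pv ∈ W := hFW _ hpvW
  have hwW : pv - F pv ∈ W := W.sub_mem hpvW hFpvW
  have hdW : pv - ws ∈ W := W.sub_mem hpvW hwsW
  -- key algebraic identity
  have key : pv - F pv = (pv - ws) - F (pv - ws) := by
    rw [map_sub, hFid ws hws]; abel
  have hpow0 : h ^ (s - ((0 : ℕ) : ℝ)) = h ^ s := by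
    norm_num
  -- bound on N 0 (pv - ws)
  have h0d : N 0 (pv - ws) ≤ (Cπ + C₂) * (h ^ s * R) := by
    have h1 := hpvb 0 (Nat.zero_le l)
    have h2 := hwsb 0 (Nat.zero_le l)
    rw [hpow0] at h1 h2
    have : N 0 (pv - ws) ≤ N 0 (v - pv) + N 0 (v - ws) := by
      have := map_add_le_add (N 0) (-(v - pv)) (v - ws)
      have e : -(v - pv) + (v - ws) = pv - ws := by abel
      rw [e, map_neg_eq_map] at this
      exact this
    nlinarith [apply_nonneg (N 0) (v - pv), apply_nonneg (N 0) (v - ws)]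
  -- bound on N 0 (pv - F pv)
  have h0w : N 0 (pv - F pv) ≤ (1 + C₄) * ((Cπ + C₂) * (h ^ s * R)) := by
    rw [key]
    have t1 : N 0 ((pv - ws) - F (pv - ws)) ≤ N 0 (pv - ws) + N 0 (F (pv - ws)) := by
      have := map_add_le_add (N 0) (pv - ws) (-(F (pv - ws)))
      have e : (pv - ws) + -(F (pv - ws)) = (pv - ws) - F (pv - ws) := by abel
      rw [e, map_neg_eq_map] at this
      exact this
    have t2 : N 0 (F (pv - ws)) ≤ C₄ * M 0 (pv - ws) := hFb _ hdW 0 (Nat.zero_le l)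
    have t3 : M 0 (pv - ws) ≤ N 0 (pv - ws) := hMN _ hdW 0 (Nat.zero_le l)
    nlinarith [apply_nonneg (N 0) (pv - ws)]
  -- bound on N m (A (pv - F pv))
  have hAwW : A (pv - F pv) ∈ W := hVW (hAV _ hwW)
  have hAm : N m (A (pv - F pv)) ≤
      C₁ / h ^ m * (C₃ * ((1 + C₄) * ((Cπ + C₂) * (h ^ s * R)))) := by
    have t1 : N m (A (pv - F pv)) ≤ C₁ / h ^ m * N 0 (A (pv - F pv)) :=
      hA1 _ hAwW m hm
    have t2 : N 0 (A (pv - F pv)) ≤ C₃ * N 0 (pv - F pv) := hAb _ hwW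
    have hpos : 0 ≤ C₁ / h ^ m := by positivity
    calc N m (A (pv - F pv)) ≤ C₁ / h ^ m * N 0 (A (pv - F pv)) := t1
      _ ≤ C₁ / h ^ m * (C₃ * N 0 (pv - F pv)) := by
          apply mul_le_mul_of_nonneg_left _ hpos; exact t2
      _ ≤ C₁ / h ^ m * (C₃ * ((1 + C₄) * ((Cπ + C₂) * (h ^ s * R)))) := by
          apply mul_le_mul_of_nonneg_left _ hpos
          exact mul_le_mul_of_nonneg_left h0w hC₃.le
  -- put it together
  have split : N m (v - A (F pv)) ≤ N m (v - pv) + N m (A (pv - F pv)) := by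
    have e : v - A (F pv) = (v - pv) + A (pv - F pv) := by
      rw [map_sub, hAid pv hpv]; abel
    rw [e]
    exact map_add_le_add (N m) _ _
  have hpowm : h ^ (s - (m : ℝ)) = h ^ s / h ^ m := by
    rw [Real.rpow_sub hh, Real.rpow_natCast]
  have hfin : C₁ / h ^ m * (C₃ * ((1 + C₄) * ((Cπ + C₂) * (h ^ s * R))))
      = C₁ * C₃ * (1 + C₄) * (Cπ + C₂) * h ^ (s - (m : ℝ)) * R := by
    rw [hpowm]; field_simp
  have h1 := hpvb m hm
  calc N m (v - A (F pv)) ≤ N m (v - pv) + N m (A (pv - F pv)) := split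
    _ ≤ Cπ * h ^ (s - (m : ℝ)) * R
        + C₁ * C₃ * (1 + C₄) * (Cπ + C₂) * h ^ (s - (m : ℝ)) * R := by
        rw [← hfin]; exact add_le_add h1 hAm
    _ = (Cπ + C₁ * C₃ * (1 + C₄) * (Cπ + C₂)) * h ^ (s - (m : ℝ)) * R := by ring
end

section
/- (Parabolic energy-norm error estimate; core of Theorem 3.4.) In the parabolic setting, let ⦀·⦀_h be a seminorm on V_h and α > 0 with α ⦀v⦀_h² ≤ a_h(v, v) for all v ∈ V_h (coercivity of the Nitsche form). Then α ∫₀ᵀ ⦀e(t)⦀_h² dt ≤ ‖e(0)‖² + 3 (∫₀ᵀ ‖ρ(t)‖ dt)². -/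
/-- Parabolic energy-norm error estimate; core of Theorem 3.4:
In the parabolic setting (real inner product space `H`, subspace `V_h`, bilinear form
`a_h`, error `e` continuously differentiable on `[0,T]` with values in `V_h`,
perturbation `ρ` continuous on `[0,T]`, error equation
`⟨e'(t), v⟩ + a_h(e(t), v) = -⟨ρ(t), v⟩` for all `v ∈ V_h`), if `⦀·⦀_h` is a
seminorm on `V_h` and `α ⦀v⦀_h² ≤ a_h(v,v)` for all `v ∈ V_h` with `α > 0`, then
`α ∫₀ᵀ ⦀e(t)⦀_h² dt ≤ ‖e(0)‖² + 3 (∫₀ᵀ ‖ρ(t)‖ dt)²`. -/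
theorem stmt_13 {H : Type*} [NormedAddCommGroup H] [InnerProductSpace ℝ H]
    (Vh : Submodule ℝ H) (ah : H →ₗ[ℝ] H →ₗ[ℝ] ℝ)
    (T : ℝ) (hT : 0 < T)
    (e e' ρ : ℝ → H)
    (he : ∀ t ∈ Set.Icc (0 : ℝ) T, HasDerivWithinAt e (e' t) (Set.Icc 0 T) t)
    (he' : ContinuousOn e' (Set.Icc 0 T))
    (hρ : ContinuousOn ρ (Set.Icc 0 T))
    (heVh : ∀ t ∈ Set.Icc (0 : ℝ) T, e t ∈ Vh)
    -- the error equation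
    (herr : ∀ t ∈ Set.Icc (0 : ℝ) T, ∀ v ∈ Vh,
      (inner ℝ (e' t) v : ℝ) + ah (e t) v = -(inner ℝ (ρ t) v : ℝ))
    -- the energy seminorm and the coercivity of a_h
    (enorm : Seminorm ℝ H) (α : ℝ) (hα : 0 < α)
    (hcoer : ∀ v ∈ Vh, α * enorm v ^ 2 ≤ ah v v) :
    α * ∫ t in (0 : ℝ)..T, enorm (e t) ^ 2 ≤
      ‖e 0‖ ^ 2 + 3 * (∫ t in (0 : ℝ)..T, ‖ρ t‖) ^ 2 := by
  have hecont : ContinuousOn e (Set.Icc 0 T) :=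
    fun t ht => (he t ht).continuousWithinAt
  set R := ∫ t in (0:ℝ)..T, ‖ρ t‖ with hRdef
  set φ : ℝ → ℝ := fun t => ‖e t‖ ^ 2 with hφdef
  set ψ : ℝ → ℝ := fun t => 2 * ((inner ℝ (e' t) (e t)) : ℝ) with hψdef
  -- derivative of φ
  have hφderiv : ∀ t ∈ Set.Icc (0:ℝ) T, HasDerivWithinAt φ (ψ t) (Set.Icc 0 T) t := by
    intro t ht
    have h := (he t ht).inner ℝ (he t ht)
    have h1 : ((inner ℝ (e t) (e' t)) : ℝ) + inner ℝ (e' t) (e t) = ψ t := by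
      simp only [hψdef]; rw [real_inner_comm (e t) (e' t)]; ring
    rw [h1] at h
    have h2 : (fun s => ((inner ℝ (e s) (e s)) : ℝ)) = φ := by
      funext s; simp [hφdef, real_inner_self_eq_norm_sq]
    rwa [h2] at h
  have hφcont : ContinuousOn φ (Set.Icc 0 T) := hecont.norm.pow 2
  have hψcont : ContinuousOn ψ (Set.Icc 0 T) :=
    continuousOn_const.mul (he'.inner hecont)
  have hgcont : ContinuousOn (fun t => 2 * (‖ρ t‖ * ‖e t‖)) (Set.Icc 0 T) :=
    continuousOn_const.mul (hρ.norm.mul hecont.norm)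
  -- integrability helpers
  have hsubT : ∀ s ∈ Set.Icc (0:ℝ) T, Set.Icc (0:ℝ) s ⊆ Set.Icc (0:ℝ) T :=
    fun s hs => Set.Icc_subset_Icc le_rfl hs.2
  have hψint : ∀ s ∈ Set.Icc (0:ℝ) T, IntervalIntegrable ψ MeasureTheory.volume 0 s := by
    intro s hs
    apply ContinuousOn.intervalIntegrable
    rw [Set.uIcc_of_le hs.1]
    exact hψcont.mono (hsubT s hs)
  have hgint : ∀ s ∈ Set.Icc (0:ℝ) T,
      IntervalIntegrable (fun t => 2 * (‖ρ t‖ * ‖e t‖)) MeasureTheory.volume 0 s := by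
    intro s hs
    apply ContinuousOn.intervalIntegrable
    rw [Set.uIcc_of_le hs.1]
    exact hgcont.mono (hsubT s hs)
  have hρint : IntervalIntegrable (fun t => ‖ρ t‖) MeasureTheory.volume 0 T := by
    apply ContinuousOn.intervalIntegrable
    rw [Set.uIcc_of_le hT.le]
    exact hρ.norm
  -- FTC
  have hFTC : ∀ s ∈ Set.Icc (0:ℝ) T, ∫ t in (0:ℝ)..s, ψ t = φ s - φ 0 := by
    intro s hs
    apply intervalIntegral.integral_eq_sub_of_hasDeriv_right_of_le hs.1
      (hφcont.mono (hsubT s hs)) _ (hψint s hs)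
    intro x hx
    have hxT : x ∈ Set.Ioo (0:ℝ) T := ⟨hx.1, lt_of_lt_of_le hx.2 hs.2⟩
    exact ((hφderiv x (Set.Ioo_subset_Icc_self hxT)).hasDerivAt
      (Icc_mem_nhds hxT.1 hxT.2)).hasDerivWithinAt
  -- the error equation tested with v = e t
  have key : ∀ t ∈ Set.Icc (0:ℝ) T,
      ψ t = -2 * ((inner ℝ (ρ t) (e t)) : ℝ) - 2 * ah (e t) (e t) := by
    intro t ht
    have h := herr t ht (e t) (heVh t ht)
    simp only [hψdef]; linarith
  have hcoer' : ∀ t ∈ Set.Icc (0:ℝ) T, α * (enorm (e t)) ^ 2 ≤ ah (e t) (e t) :=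
    fun t ht => hcoer _ (heVh t ht)
  have hbound1 : ∀ t ∈ Set.Icc (0:ℝ) T, ψ t ≤ 2 * (‖ρ t‖ * ‖e t‖) := by
    intro t ht
    have hk := key t ht
    have hc := hcoer' t ht
    have habs := abs_real_inner_le_norm (ρ t) (e t)
    have hne := neg_abs_le ((inner ℝ (ρ t) (e t)) : ℝ)
    have h0 : 0 ≤ α * (enorm (e t)) ^ 2 := by positivity
    nlinarith
  -- pointwise bound on ‖e s‖²
  have hB : ∀ s ∈ Set.Icc (0:ℝ) T,
      φ s ≤ φ 0 + ∫ t in (0:ℝ)..s, 2 * (‖ρ t‖ * ‖e t‖) := by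
    intro s hs
    have h1 : ∫ t in (0:ℝ)..s, ψ t ≤ ∫ t in (0:ℝ)..s, 2 * (‖ρ t‖ * ‖e t‖) :=
      intervalIntegral.integral_mono_on hs.1 (hψint s hs) (hgint s hs)
        (fun x hx => hbound1 x (hsubT s hs hx))
    have h2 := hFTC s hs
    linarith
  -- maximum of ‖e‖ on [0,T]
  obtain ⟨t₀, ht₀, hmax⟩ := (isCompact_Icc).exists_isMaxOn
    (Set.nonempty_Icc.2 hT.le) hecont.norm
  set M := ‖e t₀‖ with hMdef
  have hMle : ∀ t ∈ Set.Icc (0:ℝ) T, ‖e t‖ ≤ M := fun t ht => hmax ht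
  have h0mem : (0:ℝ) ∈ Set.Icc (0:ℝ) T := ⟨le_rfl, hT.le⟩
  have hTmem : T ∈ Set.Icc (0:ℝ) T := ⟨hT.le, le_rfl⟩
  have hEM : ‖e 0‖ ≤ M := hMle 0 h0mem
  have hE0 : (0:ℝ) ≤ ‖e 0‖ := norm_nonneg _
  have hM0 : (0:ℝ) ≤ M := norm_nonneg _
  have hR0 : (0:ℝ) ≤ R :=
    intervalIntegral.integral_nonneg hT.le (fun t _ => norm_nonneg _)
  -- ∫ 2‖ρ‖‖e‖ ≤ 2 M R
  have hgMR : ∫ t in (0:ℝ)..T, 2 * (‖ρ t‖ * ‖e t‖) ≤ 2 * (M * R) := by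
    have h1 : ∫ t in (0:ℝ)..T, 2 * (‖ρ t‖ * ‖e t‖) ≤ ∫ t in (0:ℝ)..T, (2*M) * ‖ρ t‖ := by
      apply intervalIntegral.integral_mono_on hT.le (hgint T hTmem) (hρint.const_mul _)
      intro x hx
      have := hMle x hx
      nlinarith [norm_nonneg (ρ x)]
    have h2 : ∫ t in (0:ℝ)..T, (2*M) * ‖ρ t‖ = (2*M) * R :=
      intervalIntegral.integral_const_mul _ _
    rw [h2] at h1; linarith
  -- M ≤ ‖e 0‖ + 2 R
  have hMbound : M ≤ ‖e 0‖ + 2 * R := by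
    have h1 := hB t₀ ht₀
    have h2 : ∫ t in (0:ℝ)..t₀, 2 * (‖ρ t‖ * ‖e t‖) ≤
        ∫ t in (0:ℝ)..T, 2 * (‖ρ t‖ * ‖e t‖) := by
      apply intervalIntegral.integral_mono_interval le_rfl ht₀.1 ht₀.2 _ (hgint T hTmem)
      apply MeasureTheory.ae_of_all
      intro x
      positivity
    have hM2 : M ^ 2 ≤ ‖e 0‖ ^ 2 + 2 * (M * R) := by
      simp only [hφdef, hMdef] at h1 ⊢
      linarith
    nlinarith [sq_nonneg (M - ‖e 0‖), sq_nonneg (M + ‖e 0‖)]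
  -- main estimate
  by_cases hInt : IntervalIntegrable (fun t => (enorm (e t) : ℝ) ^ 2) MeasureTheory.volume 0 T
  · have hmain : ∫ t in (0:ℝ)..T, (2*α) * (enorm (e t)) ^ 2 ≤
        ∫ t in (0:ℝ)..T, (2 * (‖ρ t‖ * ‖e t‖) - ψ t) := by
      apply intervalIntegral.integral_mono_on hT.le (hInt.const_mul (2*α))
        ((hgint T hTmem).sub (hψint T hTmem))
      intro x hx
      have hk := key x hx
      have hc := hcoer' x hx
      have habs := abs_real_inner_le_norm (ρ x) (e x)
      have hne := neg_abs_le ((inner ℝ (ρ x) (e x)) : ℝ)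
      nlinarith
    have hsplit : ∫ t in (0:ℝ)..T, (2 * (‖ρ t‖ * ‖e t‖) - ψ t) =
        (∫ t in (0:ℝ)..T, 2 * (‖ρ t‖ * ‖e t‖)) - ∫ t in (0:ℝ)..T, ψ t :=
      intervalIntegral.integral_sub (hgint T hTmem) (hψint T hTmem)
    have hconst : ∫ t in (0:ℝ)..T, (2*α) * (enorm (e t)) ^ 2 =
        (2*α) * ∫ t in (0:ℝ)..T, (enorm (e t)) ^ 2 :=
      intervalIntegral.integral_const_mul _ _
    have hFT := hFTC T hTmem
    have hφT : (0:ℝ) ≤ ‖e T‖ ^ 2 := by positivity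
    have hile : (2*α) * ∫ t in (0:ℝ)..T, (enorm (e t)) ^ 2 ≤
        ‖e 0‖ ^ 2 + 2 * (M * R) := by
      rw [← hconst]
      rw [hsplit, hFT] at hmain
      simp only [hφdef] at hmain
      linarith
    nlinarith [sq_nonneg (‖e 0‖ - R), mul_le_mul_of_nonneg_right hMbound hR0]
  · rw [intervalIntegral.integral_undef hInt]
    have : α * 0 = 0 := mul_zero α
    rw [this]
    positivity
end
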